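/- Let f(y) = e^y. Then for every integer k ≥ 0 and every pair of points P, Q ∈ ℝ^m there exists a linear isomorphism φ : ℝ^m → ℝ^m such that g_Q(φu, φv) = g_P(u, v) for all u, v ∈ ℝ^m and ∇^jR_Q(φξ₁, …, φξ_{4+j}) = ∇^jR_P(ξ₁, …, ξ_{4+j}) for all 0 ≤ j ≤ k and all arguments. That is, M¹_{2p+6} = M_{2p+6, e^y} is k-curvature homogeneous for every k. -/

import Mathlib

set_option linter.unreachableTactic false
set_option linter.unusedTactic false
set_option linter.unnecessarySeqFocus false


/- Setting of Gilkey–Nikčević: m = 2p+6, coordinates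
   (x, y, z_0, …, z_p, x̄, ȳ, z̄_0, …, z̄_p) on ℝ^m. -/

/-- The model space ℝ^{2p+6}. -/
abbrev Vp (p : ℕ) := Fin (2*p+6) → ℝ

/-- index of the coordinate x -/
def ix (p : ℕ) : Fin (2*p+6) := ⟨0, by omega⟩
/-- index of the coordinate y -/
def iy (p : ℕ) : Fin (2*p+6) := ⟨1, by omega⟩
/-- index of the coordinate z_i -/
def iz (p : ℕ) (i : Fin (p+1)) : Fin (2*p+6) := ⟨2 + i.1, by have := i.2; omega⟩
/-- index of the coordinate x̄ -/
def ixb (p : ℕ) : Fin (2*p+6) := ⟨p+3, by omega⟩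
/-- index of the coordinate ȳ -/
def iyb (p : ℕ) : Fin (2*p+6) := ⟨p+4, by omega⟩
/-- index of the coordinate z̄_i -/
def izb (p : ℕ) (i : Fin (p+1)) : Fin (2*p+6) := ⟨p+5+i.1, by have := i.2; omega⟩

/-- F(y, z⃗) = f(y) + Σ_{i=0}^p y^{i+1} z_i, evaluated at the coordinates of the point P. -/
noncomputable def FF (p : ℕ) (f : ℝ → ℝ) (P : Vp p) : ℝ :=
  f (P (iy p)) + ∑ i : Fin (p+1), (P (iy p))^(i.1+1) * P (iz p i)

/-- The symmetric bilinear form g_P on ℝ^{2p+6}: the only nonzero components on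
basis vectors are g(∂x,∂x̄)=g(∂y,∂ȳ)=g(∂z_i,∂z̄_i)=1 and g(∂x,∂x) = -2F(y,z⃗). -/
noncomputable def gP (p : ℕ) (f : ℝ → ℝ) (P : Vp p) (u v : Vp p) : ℝ :=
  u (ix p) * v (ixb p) + u (ixb p) * v (ix p)
  + u (iy p) * v (iyb p) + u (iyb p) * v (iy p)
  + ∑ i : Fin (p+1), (u (iz p i) * v (izb p i) + u (izb p i) * v (iz p i))
  - 2 * FF p f P * (u (ix p) * v (ix p))

/-- wedge component: (u ∧ v)_{ab} = u_a v_b - u_b v_a. -/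
def wdg (p : ℕ) (a b : Fin (2*p+6)) (u v : Vp p) : ℝ := u a * v b - u b * v a

/-- The (4+k)-linear form ∇^kR_P on ℝ^{2p+6}: it is antisymmetric in arguments 1,2 and
in arguments 3,4, symmetric under interchanging the pair (1,2) with the pair (3,4),
and its only nonzero components on basis vectors up to these symmetries are
∇^kR_P(∂x,∂y,∂y,∂x;∂y,…,∂y) = f^{(k+2)}(y) + Σ_i (d/dy)^{k+2}(y^{i+1})·z_i,
∇^kR_P(∂x,∂y,∂z_i,∂x;∂y,…,∂y) = (d/dy)^{k+1}(y^{i+1}), and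
∇^kR_P(∂x,∂y,∂y,∂x;∂y,…,∂z_i,…,∂y) = (d/dy)^{k+1}(y^{i+1}) (∂z_i in one derivative slot).
This `def` is the unique multilinear map with these components, written out explicitly. -/
noncomputable def nR (p : ℕ) (f : ℝ → ℝ) (k : ℕ) (P : Vp p)
    (ξ₁ ξ₂ ξ₃ ξ₄ : Vp p) (η : Fin k → Vp p) : ℝ :=
  -(wdg p (ix p) (iy p) ξ₁ ξ₂ * wdg p (ix p) (iy p) ξ₃ ξ₄) *
    ((iteratedDeriv (k+2) f (P (iy p))
        + ∑ i : Fin (p+1), iteratedDeriv (k+2) (fun t => t^(i.1+1)) (P (iy p)) * P (iz p i))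
        * ∏ j : Fin k, η j (iy p)
      + ∑ i : Fin (p+1), iteratedDeriv (k+1) (fun t => t^(i.1+1)) (P (iy p)) *
          ∑ j : Fin k, η j (iz p i) * ∏ l ∈ Finset.univ.erase j, η l (iy p))
  - (∑ i : Fin (p+1), iteratedDeriv (k+1) (fun t => t^(i.1+1)) (P (iy p)) *
      (wdg p (ix p) (iy p) ξ₁ ξ₂ * wdg p (ix p) (iz p i) ξ₃ ξ₄
        + wdg p (ix p) (iz p i) ξ₁ ξ₂ * wdg p (ix p) (iy p) ξ₃ ξ₄)) * ∏ j : Fin k, η j (iy p)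


/-- `Dn n j x` = n-th derivative of `t ↦ t^(j+1)` at `x`. -/
noncomputable def Dn (n j : ℕ) (x : ℝ) : ℝ := iteratedDeriv n (fun t : ℝ => t^(j+1)) x

/-- binomial-shift matrix entries. -/
noncomputable def Am (s : ℝ) (i j : ℕ) : ℝ := ((i+1).choose (j+1) : ℝ) * s^(i-j)

lemma Am_eq_zero (s : ℝ) {i j : ℕ} (h : i < j) : Am s i j = 0 := by
  unfold Am
  rw [Nat.choose_eq_zero_of_lt (by omega), Nat.cast_zero, zero_mul]

lemma iterD_poly (n : ℕ) (fs : Finset ℕ) (coef : ℕ → ℝ) :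
    iteratedDeriv n (fun x : ℝ => ∑ m ∈ fs, coef m * x^m)
      = fun x => ∑ m ∈ fs, coef m * ((m.descFactorial n : ℝ) * x^(m-n)) := by
  induction n with
  | zero => simp [iteratedDeriv_zero]
  | succ n IH =>
      rw [iteratedDeriv_succ, IH]
      funext x
      rw [deriv_fun_sum (fun m _ => by
        exact (differentiableAt_pow _).const_mul _ |>.const_mul _)]
      refine Finset.sum_congr rfl fun m _ => ?_
      rw [deriv_const_mul _ ((differentiableAt_pow _).const_mul _),
        deriv_const_mul _ (differentiableAt_pow _), deriv_pow_field]
      rw [Nat.descFactorial_succ]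
      rcases Nat.lt_or_ge n m with h | h
      · have h2 : m - n = (m - (n+1)) + 1 := by omega
        rw [h2]
        push_cast [Nat.cast_sub (by omega : n ≤ m)]
        ring
      · have h1 : m - n = 0 := by omega
        have h2 : m - (n+1) = 0 := by omega
        simp [h1, h2]

lemma iterD_pow (n m : ℕ) :
    iteratedDeriv n (fun x : ℝ => x^m) = fun x => (m.descFactorial n : ℝ) * x^(m-n) := by
  have := iterD_poly n {m} (fun _ => (1:ℝ))
  simpa using this

lemma Dn_eq (n j : ℕ) (x : ℝ) : Dn n j x = ((j+1).descFactorial n : ℝ) * x^(j+1-n) := by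
  rw [Dn, iterD_pow]

lemma iterD_exp (n : ℕ) : iteratedDeriv n Real.exp = Real.exp := by
  induction n with
  | zero => simp [iteratedDeriv_zero]
  | succ n IH => rw [iteratedDeriv_succ, IH, Real.deriv_exp]

/-- KEY1 : binomial shift of derivatives of monomials. -/
lemma key1 (p : ℕ) (i : Fin (p+1)) (n : ℕ) (hn : 1 ≤ n) (b s : ℝ) :
    ∑ j : Fin (p+1), Am s i.1 j.1 * Dn n j.1 b = Dn n i.1 (b+s) := by
  have hshift : Dn n i.1 (b+s)
      = iteratedDeriv n (fun z : ℝ => (z+s)^(i.1+1)) b :=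
    (congrFun (iteratedDeriv_comp_add_const n (fun t : ℝ => t^(i.1+1)) s) b).symm
  have hfun : (fun z : ℝ => (z+s)^(i.1+1))
      = fun z : ℝ => ∑ r ∈ Finset.range (i.1+2), (s^(i.1+1-r) * ((i.1+1).choose r : ℝ)) * z^r := by
    funext z
    rw [add_pow]
    exact Finset.sum_congr rfl fun r _ => by ring
  have h1 : iteratedDeriv n (fun z : ℝ => (z+s)^(i.1+1)) b
      = ∑ r ∈ Finset.range (i.1+2),
          (s^(i.1+1-r) * ((i.1+1).choose r : ℝ)) * (((r).descFactorial n : ℝ) * b^(r-n)) := by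
    rw [hfun]
    exact congrFun (iterD_poly n (Finset.range (i.1+2)) _) b
  rw [hshift, h1, Finset.sum_range_succ']
  have hd0 : ((0:ℕ).descFactorial n : ℝ) = 0 := by
    obtain ⟨n', rfl⟩ := Nat.exists_eq_add_of_le hn
    rw [Nat.add_comm]
    simp [Nat.descFactorial_succ]
  rw [hd0]
  simp only [mul_zero, zero_mul, add_zero]
  rw [Fin.sum_univ_eq_sum_range (fun j => Am s i.1 j * Dn n j b)]
  rw [show Finset.range (p+1) = Finset.range (i.1+1) ∪ (Finset.range (p+1) \ Finset.range (i.1+1)) by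
    rw [Finset.union_sdiff_of_subset]
    exact Finset.range_subset_range.2 (by omega)]
  rw [Finset.sum_union (Finset.disjoint_sdiff)]
  have hz : ∑ j ∈ Finset.range (p+1) \ Finset.range (i.1+1), Am s i.1 j * Dn n j b = 0 := by
    refine Finset.sum_eq_zero fun j hj => ?_
    simp only [Finset.mem_sdiff, Finset.mem_range] at hj
    rw [Am_eq_zero _ (by omega), zero_mul]
  rw [hz, add_zero]
  refine Finset.sum_congr rfl fun j hj => ?_
  rw [Finset.mem_range] at hj
  rw [Dn_eq, Am]
  have : i.1 + 1 - (j+1) = i.1 - j := by omega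
  rw [this]
  ring

/-- KEY2 : Leibniz-type identity. -/
lemma key2 (k i : ℕ) (b : ℝ) :
    ((k:ℝ)+2) * Dn (k+1) i b = Dn (k+2) (i+1) b - b * Dn (k+2) i b := by
  rw [Dn_eq, Dn_eq, Dn_eq]
  have e1 : (i+1+1).descFactorial (k+2) = (i+2) * (i+1).descFactorial (k+1) :=
    Nat.succ_descFactorial_succ (i+1) (k+1)
  have e2 : (i+1).descFactorial (k+2) = (i+1-(k+1)) * (i+1).descFactorial (k+1) :=
    Nat.descFactorial_succ (i+1) (k+1)
  rw [e1, e2]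
  rcases Nat.lt_or_ge i k with h | h
  · have hz : (i+1).descFactorial (k+1) = 0 := by
      exact Nat.descFactorial_of_lt (by omega)
    rw [hz]
    push_cast
    ring
  · rcases Nat.eq_or_lt_of_le h with heq | h'
    · -- k = i
      have h1 : i + 1 - (k+1) = 0 := by omega
      have h2 : i + 1 + 1 - (k + 2) = 0 := by omega
      have h3 : i + 1 - (k+2) = 0 := by omega
      rw [h1, h2, h3, heq]
      push_cast
      ring
    · -- k < i
      have h1 : i + 1 - (k+1) = i - k := by omega
      have h2 : i + 1 + 1 - (k + 2) = i - k := by omega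
      have h3 : i + 1 - (k+2) = i - k - 1 := by omega
      have h4 : i - k = (i - k - 1) + 1 := by omega
      have h5 : ((i - k - 1 : ℕ) : ℝ) = (i:ℝ) - k - 1 := by
        rw [Nat.sub_sub, Nat.cast_sub (by omega : k+1 ≤ i)]
        push_cast; ring
      rw [h1, h2, h3, h4]
      push_cast
      rw [h5]
      ring

lemma Dn_zero_slot (k : ℕ) (b : ℝ) : Dn (k+2) 0 b = 0 := by
  rw [Dn_eq]
  simp [Nat.descFactorial_succ]

/-! ### The linear map used to identify the curvature model at `P` with the one at `Q`. -/

/-- The candidate isometry, written in coordinates. -/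
noncomputable def Tfun (p : ℕ) (c cinv r : ℝ) (ev mu : Fin (p+1) → ℝ)
    (A B : Fin (p+1) → Fin (p+1) → ℝ) (u : Vp p) : Vp p := fun a =>
  if h0 : a.1 = 0 then c * u (ix p)
  else if h1 : a.1 = 1 then u (iy p)
  else if h2 : a.1 < p + 3 then
    ev ⟨a.1 - 2, by omega⟩ * u (iy p) + ∑ i : Fin (p+1), A i ⟨a.1 - 2, by omega⟩ * u (iz p i)
  else if h3 : a.1 = p + 3 then cinv * u (ixb p) + r * u (ix p)
  else if h4 : a.1 = p + 4 then u (iyb p) + ∑ i : Fin (p+1), mu i * u (izb p i)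
  else ∑ j : Fin (p+1), B j ⟨a.1 - (p+5), by have := a.2; omega⟩ * u (izb p j)

section TfunLemmas

variable {p : ℕ} (c cinv r : ℝ) (ev mu : Fin (p+1) → ℝ)
    (A B : Fin (p+1) → Fin (p+1) → ℝ) (u v : Vp p)

lemma Tfun_ix : Tfun p c cinv r ev mu A B u (ix p) = c * u (ix p) := by
  rw [Tfun, dif_pos (by simp only [ix] <;> omega)]

lemma Tfun_iy : Tfun p c cinv r ev mu A B u (iy p) = u (iy p) := by
  rw [Tfun, dif_neg (by simp only [iy] <;> omega), dif_pos (by simp only [iy] <;> omega)]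

lemma Tfun_iz (j : Fin (p+1)) :
    Tfun p c cinv r ev mu A B u (iz p j)
      = ev j * u (iy p) + ∑ i : Fin (p+1), A i j * u (iz p i) := by
  have hj := j.2
  rw [Tfun]
  rw [dif_neg (by simp only [iz] <;> omega), dif_neg (by simp only [iz] <;> omega),
    dif_pos (by simp only [iz] <;> omega)]
  have hmk : (⟨(iz p j).1 - 2, by simp only [iz] <;> omega⟩ : Fin (p+1)) = j := by
    apply Fin.ext
    simp only [iz] <;> omega
  rw [hmk]

lemma Tfun_ixb : Tfun p c cinv r ev mu A B u (ixb p) = cinv * u (ixb p) + r * u (ix p) := by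
  rw [Tfun]
  rw [dif_neg (by simp only [ixb] <;> omega), dif_neg (by simp only [ixb] <;> omega),
    dif_neg (by simp only [ixb] <;> omega), dif_pos (by simp only [ixb] <;> omega)]

lemma Tfun_iyb : Tfun p c cinv r ev mu A B u (iyb p)
    = u (iyb p) + ∑ i : Fin (p+1), mu i * u (izb p i) := by
  rw [Tfun]
  rw [dif_neg (by simp only [iyb] <;> omega), dif_neg (by simp only [iyb] <;> omega),
    dif_neg (by simp only [iyb] <;> omega), dif_neg (by simp only [iyb] <;> omega),
    dif_pos (by simp only [iyb] <;> omega)]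

lemma Tfun_izb (j : Fin (p+1)) :
    Tfun p c cinv r ev mu A B u (izb p j)
      = ∑ i : Fin (p+1), B i j * u (izb p i) := by
  have hj := j.2
  rw [Tfun]
  rw [dif_neg (by simp only [izb] <;> omega), dif_neg (by simp only [izb] <;> omega),
    dif_neg (by simp only [izb] <;> omega), dif_neg (by simp only [izb] <;> omega),
    dif_neg (by simp only [izb] <;> omega)]
  have hmk : (⟨(izb p j).1 - (p+5), by have := (izb p j).2; omega⟩ : Fin (p+1)) = j := by
    apply Fin.ext
    simp only [izb] <;> omega
  rw [hmk]

lemma Tfun_add : Tfun p c cinv r ev mu A B (u + v)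
    = Tfun p c cinv r ev mu A B u + Tfun p c cinv r ev mu A B v := by
  funext a
  simp only [Tfun, Pi.add_apply]
  split_ifs <;> simp only [mul_add] <;> (try rw [Finset.sum_add_distrib]) <;> ring

lemma Tfun_smul (t : ℝ) : Tfun p c cinv r ev mu A B (t • u)
    = t • Tfun p c cinv r ev mu A B u := by
  funext a
  simp only [Tfun, Pi.smul_apply, smul_eq_mul]
  split_ifs
  · ring
  · ring
  · rw [mul_add, Finset.mul_sum]
    exact congrArg₂ (· + ·) (by ring) (Finset.sum_congr rfl fun i _ => by ring)
  · ring
  · rw [mul_add, Finset.mul_sum]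
    exact congrArg₂ (· + ·) (by ring) (Finset.sum_congr rfl fun i _ => by ring)
  · rw [Finset.mul_sum]
    exact Finset.sum_congr rfl fun i _ => by ring

lemma index_cases (p : ℕ) (a : Fin (2*p+6)) :
    a = ix p ∨ a = iy p ∨ (∃ j : Fin (p+1), a = iz p j) ∨ a = ixb p ∨ a = iyb p ∨
      ∃ j : Fin (p+1), a = izb p j := by
  have ha := a.2
  by_cases h0 : a.1 = 0
  · exact Or.inl (Fin.ext (by simp only [ix] <;> omega))
  by_cases h1 : a.1 = 1
  · exact Or.inr (Or.inl (Fin.ext (by simp only [iy] <;> omega)))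
  by_cases h2 : a.1 < p + 3
  · exact Or.inr (Or.inr (Or.inl ⟨⟨a.1 - 2, by omega⟩,
      Fin.ext (by simp only [iz] <;> omega)⟩))
  by_cases h3 : a.1 = p + 3
  · exact Or.inr (Or.inr (Or.inr (Or.inl (Fin.ext (by simp only [ixb] <;> omega)))))
  by_cases h4 : a.1 = p + 4
  · exact Or.inr (Or.inr (Or.inr (Or.inr (Or.inl (Fin.ext (by simp only [iyb] <;> omega))))))
  · exact Or.inr (Or.inr (Or.inr (Or.inr (Or.inr
      ⟨⟨a.1 - (p+5), by omega⟩, Fin.ext (by simp only [izb] <;> omega)⟩))))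

end TfunLemmas

/-! ### An abstract form of the curvature tensor, and how it transforms. -/

/-- Abstract shape of `nR` in terms of the scalar data it depends on. -/
noncomputable def NF (p k : ℕ) (α : ℝ) (β : Fin (p+1) → ℝ) (W1 W2 : ℝ)
    (V1 V2 : Fin (p+1) → ℝ) (Y : Fin k → ℝ) (Zc : Fin (p+1) → Fin k → ℝ) : ℝ :=
  -(W1 * W2) * (α * ∏ j : Fin k, Y j
      + ∑ i : Fin (p+1), β i * ∑ j : Fin k, Zc i j * ∏ l ∈ Finset.univ.erase j, Y l)
  - (∑ i : Fin (p+1), β i * (W1 * V2 i + V1 i * W2)) * ∏ j : Fin k, Y j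

lemma nR_eq_NF (p k : ℕ) (f : ℝ → ℝ) (P : Vp p) (ξ₁ ξ₂ ξ₃ ξ₄ : Vp p) (η : Fin k → Vp p) :
    nR p f k P ξ₁ ξ₂ ξ₃ ξ₄ η
      = NF p k
          (iteratedDeriv (k+2) f (P (iy p))
            + ∑ i : Fin (p+1), Dn (k+2) i.1 (P (iy p)) * P (iz p i))
          (fun i => Dn (k+1) i.1 (P (iy p)))
          (wdg p (ix p) (iy p) ξ₁ ξ₂) (wdg p (ix p) (iy p) ξ₃ ξ₄)
          (fun i => wdg p (ix p) (iz p i) ξ₁ ξ₂) (fun i => wdg p (ix p) (iz p i) ξ₃ ξ₄)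
          (fun j => η j (iy p)) (fun i j => η j (iz p i)) := rfl

/-- How `NF` transforms under the linear map `Tfun`. -/
lemma NF_transform (p k : ℕ) (es c αP αQ : ℝ) (βP βQ ev : Fin (p+1) → ℝ)
    (AM : Fin (p+1) → Fin (p+1) → ℝ)
    (W1 W2 : ℝ) (V1 V2 : Fin (p+1) → ℝ) (Y : Fin k → ℝ) (Zc : Fin (p+1) → Fin k → ℝ)
    (hc : c * c = es)
    (hC1 : ∀ i : Fin (p+1), es * ∑ i' : Fin (p+1), AM i i' * βQ i' = βP i)
    (hC2 : es * αQ + ((k:ℝ)+2) * es * (∑ i : Fin (p+1), βQ i * ev i) = αP) :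
    NF p k αQ βQ (c*W1) (c*W2)
      (fun i => c * (ev i * W1 + ∑ i' : Fin (p+1), AM i' i * V1 i'))
      (fun i => c * (ev i * W2 + ∑ i' : Fin (p+1), AM i' i * V2 i'))
      Y
      (fun i j => ev i * Y j + ∑ i' : Fin (p+1), AM i' i * Zc i' j)
    = NF p k αP βP W1 W2 V1 V2 Y Zc := by
  classical
  -- step B : the key contraction identity
  have hB : ∀ X : Fin (p+1) → ℝ,
      es * ∑ i : Fin (p+1), βQ i * ∑ i' : Fin (p+1), AM i' i * X i'
        = ∑ i' : Fin (p+1), βP i' * X i' := by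
    intro X
    calc es * ∑ i : Fin (p+1), βQ i * ∑ i' : Fin (p+1), AM i' i * X i'
        = ∑ i : Fin (p+1), ∑ i' : Fin (p+1), es * (βQ i * (AM i' i * X i')) := by
          rw [Finset.mul_sum]
          refine Finset.sum_congr rfl fun i _ => ?_
          rw [Finset.mul_sum, Finset.mul_sum]
      _ = ∑ i' : Fin (p+1), ∑ i : Fin (p+1), es * (βQ i * (AM i' i * X i')) :=
          Finset.sum_comm
      _ = ∑ i' : Fin (p+1), βP i' * X i' := by
          refine Finset.sum_congr rfl fun i' _ => ?_
          rw [← hC1 i', Finset.mul_sum, Finset.sum_mul]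
          exact Finset.sum_congr rfl fun i _ => by ring
  -- the transformed "slot" sums
  have hS' : ∀ i : Fin (p+1),
      (∑ j : Fin k, (ev i * Y j + ∑ i' : Fin (p+1), AM i' i * Zc i' j)
          * ∏ l ∈ Finset.univ.erase j, Y l)
      = ev i * ((k:ℝ) * ∏ m : Fin k, Y m)
        + ∑ i' : Fin (p+1), AM i' i
            * ∑ j : Fin k, Zc i' j * ∏ l ∈ Finset.univ.erase j, Y l := by
    intro i
    have step1 : ∀ j : Fin k,
        (ev i * Y j + ∑ i' : Fin (p+1), AM i' i * Zc i' j) * ∏ l ∈ Finset.univ.erase j, Y l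
        = ev i * ∏ m : Fin k, Y m
          + ∑ i' : Fin (p+1), AM i' i * (Zc i' j * ∏ l ∈ Finset.univ.erase j, Y l) := by
      intro j
      rw [add_mul, Finset.sum_mul, mul_assoc,
        Finset.mul_prod_erase Finset.univ Y (Finset.mem_univ j)]
      exact congrArg₂ (· + ·) rfl (Finset.sum_congr rfl fun i' _ => by ring)
    calc (∑ j : Fin k, (ev i * Y j + ∑ i' : Fin (p+1), AM i' i * Zc i' j)
            * ∏ l ∈ Finset.univ.erase j, Y l)
        = ∑ j : Fin k, (ev i * ∏ m : Fin k, Y m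
            + ∑ i' : Fin (p+1), AM i' i * (Zc i' j * ∏ l ∈ Finset.univ.erase j, Y l)) :=
          Finset.sum_congr rfl fun j _ => step1 j
      _ = (∑ _j : Fin k, ev i * ∏ m : Fin k, Y m)
            + ∑ j : Fin k, ∑ i' : Fin (p+1), AM i' i
                * (Zc i' j * ∏ l ∈ Finset.univ.erase j, Y l) :=
          Finset.sum_add_distrib
      _ = ev i * ((k:ℝ) * ∏ m : Fin k, Y m)
            + ∑ i' : Fin (p+1), AM i' i
                * ∑ j : Fin k, Zc i' j * ∏ l ∈ Finset.univ.erase j, Y l := by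
          refine congrArg₂ (· + ·) ?_ ?_
          · rw [Finset.sum_const, Finset.card_univ, Fintype.card_fin, nsmul_eq_mul]
            ring
          · rw [Finset.sum_comm]
            exact Finset.sum_congr rfl fun i' _ => by rw [Finset.mul_sum]
  -- the S-part
  have h1 : es * (∑ i : Fin (p+1), βQ i
        * ∑ j : Fin k, (ev i * Y j + ∑ i' : Fin (p+1), AM i' i * Zc i' j)
            * ∏ l ∈ Finset.univ.erase j, Y l)
      = es * ((∑ i : Fin (p+1), βQ i * ev i) * ((k:ℝ) * ∏ j : Fin k, Y j))
        + ∑ i : Fin (p+1), βP i * ∑ j : Fin k, Zc i j * ∏ l ∈ Finset.univ.erase j, Y l := by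
    have e0 : (∑ i : Fin (p+1), βQ i
          * ∑ j : Fin k, (ev i * Y j + ∑ i' : Fin (p+1), AM i' i * Zc i' j)
              * ∏ l ∈ Finset.univ.erase j, Y l)
        = (∑ i : Fin (p+1), βQ i * (ev i * ((k:ℝ) * ∏ j : Fin k, Y j)))
          + ∑ i : Fin (p+1), βQ i * ∑ i' : Fin (p+1), AM i' i
              * ∑ j : Fin k, Zc i' j * ∏ l ∈ Finset.univ.erase j, Y l := by
      calc (∑ i : Fin (p+1), βQ i
            * ∑ j : Fin k, (ev i * Y j + ∑ i' : Fin (p+1), AM i' i * Zc i' j)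
                * ∏ l ∈ Finset.univ.erase j, Y l)
          = ∑ i : Fin (p+1), (βQ i * (ev i * ((k:ℝ) * ∏ j : Fin k, Y j))
              + βQ i * ∑ i' : Fin (p+1), AM i' i
                  * ∑ j : Fin k, Zc i' j * ∏ l ∈ Finset.univ.erase j, Y l) := by
            refine Finset.sum_congr rfl fun i _ => ?_
            rw [hS' i, mul_add]
        _ = _ := Finset.sum_add_distrib
    rw [e0, mul_add]
    refine congrArg₂ (· + ·) ?_ (hB _)
    refine congrArg (es * ·) ?_
    rw [Finset.sum_mul]
    exact Finset.sum_congr rfl fun i _ => by ring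
  -- the U-part
  have hU : ∀ i : Fin (p+1),
      c*W1 * (c * (ev i * W2 + ∑ i' : Fin (p+1), AM i' i * V2 i'))
        + c * (ev i * W1 + ∑ i' : Fin (p+1), AM i' i * V1 i') * (c*W2)
      = es * (ev i * (2*(W1*W2)))
        + es * ∑ i' : Fin (p+1), AM i' i * (W1 * V2 i' + V1 i' * W2) := by
    intro i
    have h : ∑ i' : Fin (p+1), AM i' i * (W1 * V2 i' + V1 i' * W2)
        = W1 * (∑ i' : Fin (p+1), AM i' i * V2 i')
          + (∑ i' : Fin (p+1), AM i' i * V1 i') * W2 := by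
      rw [Finset.mul_sum, Finset.sum_mul, ← Finset.sum_add_distrib]
      exact Finset.sum_congr rfl fun i' _ => by ring
    rw [h, ← hc]
    ring
  have h2 : (∑ i : Fin (p+1), βQ i
        * (c*W1 * (c * (ev i * W2 + ∑ i' : Fin (p+1), AM i' i * V2 i'))
          + c * (ev i * W1 + ∑ i' : Fin (p+1), AM i' i * V1 i') * (c*W2)))
      = es * ((∑ i : Fin (p+1), βQ i * ev i) * (2*(W1*W2)))
        + ∑ i : Fin (p+1), βP i * (W1 * V2 i + V1 i * W2) := by
    calc (∑ i : Fin (p+1), βQ i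
          * (c*W1 * (c * (ev i * W2 + ∑ i' : Fin (p+1), AM i' i * V2 i'))
            + c * (ev i * W1 + ∑ i' : Fin (p+1), AM i' i * V1 i') * (c*W2)))
        = ∑ i : Fin (p+1), (es * (βQ i * ev i * (2*(W1*W2)))
            + es * (βQ i * ∑ i' : Fin (p+1), AM i' i * (W1 * V2 i' + V1 i' * W2))) := by
          refine Finset.sum_congr rfl fun i _ => ?_
          rw [hU i]
          ring
      _ = (∑ i : Fin (p+1), es * (βQ i * ev i * (2*(W1*W2))))
            + ∑ i : Fin (p+1), es * (βQ i * ∑ i' : Fin (p+1), AM i' i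
                * (W1 * V2 i' + V1 i' * W2)) := Finset.sum_add_distrib
      _ = es * ((∑ i : Fin (p+1), βQ i * ev i) * (2*(W1*W2)))
            + ∑ i : Fin (p+1), βP i * (W1 * V2 i + V1 i * W2) := by
          refine congrArg₂ (· + ·) ?_ ?_
          · rw [Finset.sum_mul, Finset.mul_sum]
            try exact Finset.sum_congr rfl fun i _ => by ring
          · rw [← hB (fun i' => W1 * V2 i' + V1 i' * W2), Finset.mul_sum]
            try exact Finset.sum_congr rfl fun i _ => by rw [Finset.mul_sum]
    
  simp only [NF]
  have hcc : c*W1*(c*W2) = es*(W1*W2) := by rw [← hc]; ring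
  rw [hcc]
  linear_combination (-(W1*W2)) * h1 + (-(∏ j : Fin k, Y j)) * h2
    + (-(W1*W2) * ∏ j : Fin k, Y j) * hC2

/-! ### The shear coefficients `e_j` and the master scalar identity. -/

noncomputable def qN (p : ℕ) (q : Fin (p+1) → ℝ) (j : ℕ) : ℝ :=
  if h : j < p+1 then q ⟨j, h⟩ else 0

noncomputable def EvN (p : ℕ) (b : ℝ) (q : Fin (p+1) → ℝ) (j : ℕ) : ℝ :=
  ∑ l : Fin (p+1), if j < l.1 then b^(l.1-j-1) * q l else 0

lemma EvN_top (p : ℕ) (b : ℝ) (q : Fin (p+1) → ℝ) {j : ℕ} (hj : p ≤ j) :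
    EvN p b q j = 0 := by
  refine Finset.sum_eq_zero fun l _ => ?_
  rw [if_neg (by have := l.2; omega)]

lemma qN_top (p : ℕ) (q : Fin (p+1) → ℝ) {j : ℕ} (hj : p+1 ≤ j) : qN p q j = 0 := by
  rw [qN, dif_neg (by omega)]

lemma EvN_rec (p : ℕ) (b : ℝ) (q : Fin (p+1) → ℝ) (j : ℕ) :
    EvN p b q j = b * EvN p b q (j+1) + qN p q (j+1) := by
  have hterm : ∀ l : Fin (p+1), (if j < l.1 then b^(l.1-j-1) * q l else 0)
      = b * (if j+1 < l.1 then b^(l.1-(j+1)-1) * q l else 0)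
        + (if l.1 = j+1 then q l else 0) := by
    intro l
    rcases lt_trichotomy l.1 (j+1) with h|h|h
    · rw [if_neg (by omega), if_neg (by omega), if_neg (by omega)]; ring
    · rw [if_pos (by omega), if_neg (by omega), if_pos h]
      have h0 : l.1 - j - 1 = 0 := by omega
      rw [h0, pow_zero]; ring
    · rw [if_pos (by omega), if_pos (by omega), if_neg (by omega)]
      have h2 : l.1 - j - 1 = (l.1 - (j+1) - 1) + 1 := by omega
      rw [h2, pow_succ]; ring
  rw [EvN, Finset.sum_congr rfl (fun l _ => hterm l), Finset.sum_add_distrib]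
  refine congrArg₂ (· + ·) ?_ ?_
  · rw [EvN, Finset.mul_sum]
  · by_cases hj : j+1 < p+1
    · rw [qN, dif_pos hj]
      have : ∀ l : Fin (p+1), (if l.1 = j+1 then q l else 0)
          = if l = (⟨j+1, hj⟩ : Fin (p+1)) then q l else 0 := by
        intro l
        congr 1
        exact propext ⟨fun h => Fin.ext h, fun h => by rw [h]⟩
      rw [Finset.sum_congr rfl (fun l _ => this l), Finset.sum_ite_eq' Finset.univ]
      simp
    · rw [qN, dif_neg hj]
      refine Finset.sum_eq_zero fun l _ => ?_
      rw [if_neg (by have := l.2; omega)]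

/-- The telescoping identity `(k+2) Σ D^{k+1} e = Σ q D^{k+2}`. -/
lemma star_id (p k : ℕ) (b : ℝ) (q : Fin (p+1) → ℝ) :
    ((k:ℝ)+2) * ∑ i : Fin (p+1), Dn (k+1) i.1 b * EvN p b q i.1
      = ∑ i : Fin (p+1), q i * Dn (k+2) i.1 b := by
  have h5 : ((k:ℝ)+2) * ∑ i : Fin (p+1), Dn (k+1) i.1 b * EvN p b q i.1
      = (∑ i : Fin (p+1), EvN p b q i.1 * Dn (k+2) (i.1+1) b)
        - ∑ i : Fin (p+1), b * (EvN p b q i.1 * Dn (k+2) i.1 b) := by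
    rw [Finset.mul_sum, ← Finset.sum_sub_distrib]
    refine Finset.sum_congr rfl fun i _ => ?_
    linear_combination (EvN p b q i.1) * key2 k i.1 b
  have h6 : (∑ i : Fin (p+1), EvN p b q i.1 * Dn (k+2) (i.1+1) b)
      = ∑ i : Fin (p+1), (b * EvN p b q i.1 + q i) * Dn (k+2) i.1 b := by
    have hq' : ∀ i : Fin (p+1), (b * EvN p b q i.1 + q i) * Dn (k+2) i.1 b
        = (b * EvN p b q i.1 + qN p q i.1) * Dn (k+2) i.1 b := by
      intro i
      rw [qN, dif_pos i.2, Fin.eta]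
    rw [Finset.sum_congr rfl fun i _ => hq' i]
    rw [Fin.sum_univ_eq_sum_range (fun j => EvN p b q j * Dn (k+2) (j+1) b)]
    rw [Fin.sum_univ_eq_sum_range (fun j => (b * EvN p b q j + qN p q j) * Dn (k+2) j b)]
    set F : ℕ → ℝ := fun j => (b * EvN p b q j + qN p q j) * Dn (k+2) j b with hF
    have e1 : ∑ j ∈ Finset.range (p+2), F j
        = (∑ j ∈ Finset.range (p+1), F (j+1)) + F 0 :=
      Finset.sum_range_succ' F (p+1)
    have e2 : ∑ j ∈ Finset.range (p+2), F j
        = (∑ j ∈ Finset.range (p+1), F j) + F (p+1) :=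
      Finset.sum_range_succ F (p+1)
    have hF0 : F 0 = 0 := by
      rw [hF]
      simp only [Dn_zero_slot, mul_zero]
    have hFtop : F (p+1) = 0 := by
      rw [hF]
      simp only [EvN_top p b q (by omega : p ≤ p+1), qN_top p q (by omega : p+1 ≤ p+1),
        mul_zero, add_zero, zero_mul]
    have hFs : ∀ j : ℕ, F (j+1) = EvN p b q j * Dn (k+2) (j+1) b := by
      intro j
      simp only [hF]
      rw [← EvN_rec p b q j]
    calc (∑ j ∈ Finset.range (p+1), EvN p b q j * Dn (k+2) (j+1) b)
        = ∑ j ∈ Finset.range (p+1), F (j+1) :=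
          Finset.sum_congr rfl fun j _ => (hFs j).symm
      _ = ∑ j ∈ Finset.range (p+2), F j - F 0 := by rw [e1]; ring
      _ = ∑ j ∈ Finset.range (p+1), F j := by rw [e2, hF0, hFtop]; ring
  rw [h5, h6, ← Finset.sum_sub_distrib]
  exact Finset.sum_congr rfl fun i _ => by ring

/-- The master scalar identity (C2). -/
lemma c2_master (p k : ℕ) (b s : ℝ) (w z q : Fin (p+1) → ℝ)
    (hq : ∀ l : Fin (p+1), Real.exp s * (q l + w l) = ∑ i : Fin (p+1), z i * Am s i.1 l.1) :
    Real.exp s * (Real.exp b + ∑ i : Fin (p+1), Dn (k+2) i.1 b * w i)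
      + ((k:ℝ)+2) * Real.exp s * (∑ i : Fin (p+1), Dn (k+1) i.1 b * EvN p b q i.1)
    = Real.exp (b+s) + ∑ i : Fin (p+1), Dn (k+2) i.1 (b+s) * z i := by
  have hz : ∑ i : Fin (p+1), Dn (k+2) i.1 (b+s) * z i
      = ∑ j : Fin (p+1), (Real.exp s * (q j + w j)) * Dn (k+2) j.1 b := by
    calc ∑ i : Fin (p+1), Dn (k+2) i.1 (b+s) * z i
        = ∑ i : Fin (p+1), ∑ j : Fin (p+1), (Am s i.1 j.1 * Dn (k+2) j.1 b) * z i := by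
          refine Finset.sum_congr rfl fun i _ => ?_
          rw [← key1 p i (k+2) (by omega) b s, Finset.sum_mul]
      _ = ∑ j : Fin (p+1), ∑ i : Fin (p+1), (Am s i.1 j.1 * Dn (k+2) j.1 b) * z i :=
          Finset.sum_comm
      _ = ∑ j : Fin (p+1), (∑ i : Fin (p+1), z i * Am s i.1 j.1) * Dn (k+2) j.1 b := by
          refine Finset.sum_congr rfl fun j _ => ?_
          rw [Finset.sum_mul]
          exact Finset.sum_congr rfl fun i _ => by ring
      _ = ∑ j : Fin (p+1), (Real.exp s * (q j + w j)) * Dn (k+2) j.1 b :=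
          Finset.sum_congr rfl fun j _ => by rw [← hq j]
  have hsplit : ∑ j : Fin (p+1), (Real.exp s * (q j + w j)) * Dn (k+2) j.1 b
      = Real.exp s * (∑ j : Fin (p+1), q j * Dn (k+2) j.1 b)
        + Real.exp s * (∑ j : Fin (p+1), Dn (k+2) j.1 b * w j) := by
    rw [Finset.mul_sum, Finset.mul_sum, ← Finset.sum_add_distrib]
    exact Finset.sum_congr rfl fun j _ => by ring
  rw [Real.exp_add, hz, hsplit]
  linear_combination (Real.exp s) * star_id p k b q

/-! ### Transformation of the wedge components and of `nR` under `Tfun`. -/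

section Transform

variable {p : ℕ} (c cinv r : ℝ) (ev mu : Fin (p+1) → ℝ)
    (A B : Fin (p+1) → Fin (p+1) → ℝ)

lemma wdg_T_xy (u v : Vp p) :
    wdg p (ix p) (iy p) (Tfun p c cinv r ev mu A B u) (Tfun p c cinv r ev mu A B v)
      = c * wdg p (ix p) (iy p) u v := by
  simp only [wdg, Tfun_ix, Tfun_iy]
  ring

lemma wdg_T_xz (i : Fin (p+1)) (u v : Vp p) :
    wdg p (ix p) (iz p i) (Tfun p c cinv r ev mu A B u) (Tfun p c cinv r ev mu A B v)
      = c * (ev i * wdg p (ix p) (iy p) u v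
          + ∑ i' : Fin (p+1), A i' i * wdg p (ix p) (iz p i') u v) := by
  simp only [wdg, Tfun_ix, Tfun_iz]
  have hs : ∑ i' : Fin (p+1), A i' i * (u (ix p) * v (iz p i') - u (iz p i') * v (ix p))
      = u (ix p) * (∑ i' : Fin (p+1), A i' i * v (iz p i'))
        - (∑ i' : Fin (p+1), A i' i * u (iz p i')) * v (ix p) := by
    rw [Finset.mul_sum, Finset.sum_mul, ← Finset.sum_sub_distrib]
    exact Finset.sum_congr rfl fun i' _ => by ring
  rw [hs]
  ring

lemma nR_Tfun (k : ℕ) (f : ℝ → ℝ) (Q : Vp p) (ξ₁ ξ₂ ξ₃ ξ₄ : Vp p) (η : Fin k → Vp p) :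
    nR p f k Q (Tfun p c cinv r ev mu A B ξ₁) (Tfun p c cinv r ev mu A B ξ₂)
        (Tfun p c cinv r ev mu A B ξ₃) (Tfun p c cinv r ev mu A B ξ₄)
        (fun l => Tfun p c cinv r ev mu A B (η l))
      = NF p k
          (iteratedDeriv (k+2) f (Q (iy p))
            + ∑ i : Fin (p+1), Dn (k+2) i.1 (Q (iy p)) * Q (iz p i))
          (fun i => Dn (k+1) i.1 (Q (iy p)))
          (c * wdg p (ix p) (iy p) ξ₁ ξ₂) (c * wdg p (ix p) (iy p) ξ₃ ξ₄)
          (fun i => c * (ev i * wdg p (ix p) (iy p) ξ₁ ξ₂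
            + ∑ i' : Fin (p+1), A i' i * wdg p (ix p) (iz p i') ξ₁ ξ₂))
          (fun i => c * (ev i * wdg p (ix p) (iy p) ξ₃ ξ₄
            + ∑ i' : Fin (p+1), A i' i * wdg p (ix p) (iz p i') ξ₃ ξ₄))
          (fun l => η l (iy p))
          (fun i l => ev i * η l (iy p) + ∑ i' : Fin (p+1), A i' i * η l (iz p i')) := by
  rw [nR_eq_NF]
  rw [show (fun l => Tfun p c cinv r ev mu A B (η l) (iy p)) = (fun l => η l (iy p)) from
    funext fun l => Tfun_iy c cinv r ev mu A B (η l)]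
  rw [show (fun i (l : Fin k) => Tfun p c cinv r ev mu A B (η l) (iz p i))
      = (fun i l => ev i * η l (iy p) + ∑ i' : Fin (p+1), A i' i * η l (iz p i')) from
    funext fun i => funext fun l => Tfun_iz c cinv r ev mu A B (η l) i]
  rw [show (fun i => wdg p (ix p) (iz p i) (Tfun p c cinv r ev mu A B ξ₁)
        (Tfun p c cinv r ev mu A B ξ₂))
      = (fun i => c * (ev i * wdg p (ix p) (iy p) ξ₁ ξ₂
          + ∑ i' : Fin (p+1), A i' i * wdg p (ix p) (iz p i') ξ₁ ξ₂)) from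
    funext fun i => wdg_T_xz c cinv r ev mu A B i ξ₁ ξ₂]
  rw [show (fun i => wdg p (ix p) (iz p i) (Tfun p c cinv r ev mu A B ξ₃)
        (Tfun p c cinv r ev mu A B ξ₄))
      = (fun i => c * (ev i * wdg p (ix p) (iy p) ξ₃ ξ₄
          + ∑ i' : Fin (p+1), A i' i * wdg p (ix p) (iz p i') ξ₃ ξ₄)) from
    funext fun i => wdg_T_xz c cinv r ev mu A B i ξ₃ ξ₄]
  rw [wdg_T_xy c cinv r ev mu A B ξ₁ ξ₂, wdg_T_xy c cinv r ev mu A B ξ₃ ξ₄]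

end Transform

/-! ### The `z`–`z̄` block of the metric computation. -/

lemma gblock (p : ℕ) (AM : Matrix (Fin (p+1)) (Fin (p+1)) ℝ) (hABone : AM * AM⁻¹ = 1)
    (ev : Fin (p+1) → ℝ) (Uy Vy : ℝ) (Uz Vz Uzb Vzb : Fin (p+1) → ℝ) :
    ∑ l : Fin (p+1), ((ev l * Uy + ∑ i : Fin (p+1), AM i l * Uz i)
          * (∑ j : Fin (p+1), AM⁻¹ l j * Vzb j)
        + (∑ j : Fin (p+1), AM⁻¹ l j * Uzb j)
          * (ev l * Vy + ∑ i : Fin (p+1), AM i l * Vz i))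
    = Uy * (∑ j : Fin (p+1), (∑ l : Fin (p+1), ev l * AM⁻¹ l j) * Vzb j)
      + Vy * (∑ j : Fin (p+1), (∑ l : Fin (p+1), ev l * AM⁻¹ l j) * Uzb j)
      + ∑ i : Fin (p+1), (Uz i * Vzb i + Uzb i * Vz i) := by
  classical
  have hA : ∀ (zc zb : Fin (p+1) → ℝ),
      ∑ l : Fin (p+1), (∑ i : Fin (p+1), AM i l * zc i)
          * (∑ j : Fin (p+1), AM⁻¹ l j * zb j)
        = ∑ i : Fin (p+1), zc i * zb i := by
    intro zc zb
    calc ∑ l : Fin (p+1), (∑ i : Fin (p+1), AM i l * zc i)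
            * (∑ j : Fin (p+1), AM⁻¹ l j * zb j)
        = ∑ l : Fin (p+1), ∑ i : Fin (p+1), ∑ j : Fin (p+1),
            (AM i l * zc i) * (AM⁻¹ l j * zb j) :=
          Finset.sum_congr rfl fun l _ => Finset.sum_mul_sum _ _ _ _
      _ = ∑ i : Fin (p+1), ∑ l : Fin (p+1), ∑ j : Fin (p+1),
            (AM i l * zc i) * (AM⁻¹ l j * zb j) := Finset.sum_comm
      _ = ∑ i : Fin (p+1), ∑ j : Fin (p+1), ∑ l : Fin (p+1),
            (AM i l * zc i) * (AM⁻¹ l j * zb j) :=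
          Finset.sum_congr rfl fun i _ => Finset.sum_comm
      _ = ∑ i : Fin (p+1), ∑ j : Fin (p+1),
            (∑ l : Fin (p+1), AM i l * AM⁻¹ l j) * (zc i * zb j) := by
          refine Finset.sum_congr rfl fun i _ => Finset.sum_congr rfl fun j _ => ?_
          rw [Finset.sum_mul]
          exact Finset.sum_congr rfl fun l _ => by ring
      _ = ∑ i : Fin (p+1), ∑ j : Fin (p+1), (1 : Matrix (Fin (p+1)) (Fin (p+1)) ℝ) i j
            * (zc i * zb j) := by
          refine Finset.sum_congr rfl fun i _ => Finset.sum_congr rfl fun j _ => ?_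
          rw [← Matrix.mul_apply, hABone]
      _ = ∑ i : Fin (p+1), zc i * zb i := by
          refine Finset.sum_congr rfl fun i _ => ?_
          simp [Matrix.one_apply, ite_mul, Finset.sum_ite_eq]
  have hE : ∀ (Y0 : ℝ) (zb : Fin (p+1) → ℝ),
      ∑ l : Fin (p+1), (ev l * Y0) * (∑ j : Fin (p+1), AM⁻¹ l j * zb j)
        = Y0 * ∑ j : Fin (p+1), (∑ l : Fin (p+1), ev l * AM⁻¹ l j) * zb j := by
    intro Y0 zb
    calc ∑ l : Fin (p+1), (ev l * Y0) * (∑ j : Fin (p+1), AM⁻¹ l j * zb j)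
        = ∑ l : Fin (p+1), ∑ j : Fin (p+1), (ev l * Y0) * (AM⁻¹ l j * zb j) :=
          Finset.sum_congr rfl fun l _ => Finset.mul_sum _ _ _
      _ = ∑ j : Fin (p+1), ∑ l : Fin (p+1), (ev l * Y0) * (AM⁻¹ l j * zb j) :=
          Finset.sum_comm
      _ = ∑ j : Fin (p+1), Y0 * ((∑ l : Fin (p+1), ev l * AM⁻¹ l j) * zb j) := by
          refine Finset.sum_congr rfl fun j _ => ?_
          rw [Finset.sum_mul, Finset.mul_sum]
          exact Finset.sum_congr rfl fun l _ => by ring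
      _ = Y0 * ∑ j : Fin (p+1), (∑ l : Fin (p+1), ev l * AM⁻¹ l j) * zb j :=
          (Finset.mul_sum _ _ _).symm
  calc ∑ l : Fin (p+1), ((ev l * Uy + ∑ i : Fin (p+1), AM i l * Uz i)
          * (∑ j : Fin (p+1), AM⁻¹ l j * Vzb j)
        + (∑ j : Fin (p+1), AM⁻¹ l j * Uzb j)
          * (ev l * Vy + ∑ i : Fin (p+1), AM i l * Vz i))
      = ∑ l : Fin (p+1), (((ev l * Uy) * (∑ j : Fin (p+1), AM⁻¹ l j * Vzb j)
          + (∑ i : Fin (p+1), AM i l * Uz i) * (∑ j : Fin (p+1), AM⁻¹ l j * Vzb j))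
        + ((ev l * Vy) * (∑ j : Fin (p+1), AM⁻¹ l j * Uzb j)
          + (∑ i : Fin (p+1), AM i l * Vz i) * (∑ j : Fin (p+1), AM⁻¹ l j * Uzb j))) :=
        Finset.sum_congr rfl fun l _ => by ring
    _ = ((∑ l : Fin (p+1), (ev l * Uy) * (∑ j : Fin (p+1), AM⁻¹ l j * Vzb j))
          + ∑ l : Fin (p+1), (∑ i : Fin (p+1), AM i l * Uz i)
              * (∑ j : Fin (p+1), AM⁻¹ l j * Vzb j))
        + ((∑ l : Fin (p+1), (ev l * Vy) * (∑ j : Fin (p+1), AM⁻¹ l j * Uzb j))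
          + ∑ l : Fin (p+1), (∑ i : Fin (p+1), AM i l * Vz i)
              * (∑ j : Fin (p+1), AM⁻¹ l j * Uzb j)) := by
        rw [← Finset.sum_add_distrib, ← Finset.sum_add_distrib, ← Finset.sum_add_distrib]
    _ = _ := by
        rw [hE Uy Vzb, hE Vy Uzb, hA Uz Vzb, hA Vz Uzb]
        have : ∑ i : Fin (p+1), (Uz i * Vzb i + Uzb i * Vz i)
            = (∑ i : Fin (p+1), Uz i * Vzb i) + ∑ i : Fin (p+1), Vz i * Uzb i := by
          rw [← Finset.sum_add_distrib]
          exact Finset.sum_congr rfl fun i _ => by ring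
        rw [this]
        ring

/-! ### The concrete data used in the theorem. -/

noncomputable def AMdef (p : ℕ) (s : ℝ) : Matrix (Fin (p+1)) (Fin (p+1)) ℝ :=
  Matrix.of fun i j => Real.exp (-s) * Am s i.1 j.1

noncomputable def qdef (p : ℕ) (s : ℝ) (P Q : Vp p) : Fin (p+1) → ℝ :=
  fun l => Real.exp (-s) * (∑ i : Fin (p+1), P (iz p i) * Am s i.1 l.1) - Q (iz p l)

noncomputable def evdef (p : ℕ) (s : ℝ) (P Q : Vp p) : Fin (p+1) → ℝ :=
  fun i => EvN p (Q (iy p)) (qdef p s P Q) i.1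

noncomputable def mudef (p : ℕ) (s : ℝ) (P Q : Vp p) : Fin (p+1) → ℝ :=
  fun jj => -∑ l : Fin (p+1), evdef p s P Q l * (AMdef p s)⁻¹ l jj

noncomputable def Bdef (p : ℕ) (s : ℝ) : Fin (p+1) → Fin (p+1) → ℝ :=
  fun jj l => (AMdef p s)⁻¹ l jj

lemma AMdef_isUnit (p : ℕ) (s : ℝ) : IsUnit (AMdef p s).det := by
  have htri : (AMdef p s).BlockTriangular OrderDual.toDual := by
    intro i j hij
    have hij' : i < j := by simpa using hij
    show Real.exp (-s) * Am s i.1 j.1 = 0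
    rw [Am_eq_zero s (show i.1 < j.1 from hij'), mul_zero]
  rw [Matrix.det_of_lowerTriangular (AMdef p s) htri]
  have hdiag : ∀ i : Fin (p+1), AMdef p s i i = Real.exp (-s) := by
    intro i
    show Real.exp (-s) * Am s i.1 i.1 = _
    rw [Am, Nat.choose_self, Nat.sub_self, pow_zero, Nat.cast_one, one_mul, mul_one]
  rw [Finset.prod_congr rfl fun i _ => hdiag i, Finset.prod_const]
  exact isUnit_iff_ne_zero.mpr (pow_ne_zero _ (Real.exp_ne_zero _))

open Matrix in
/-- M¹_{2p+6} = M_{2p+6, e^y} is k-curvature homogeneous for every k: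
for every k and all points P, Q there is a linear isomorphism φ of ℝ^m with
g_Q(φu,φv) = g_P(u,v) and ∇^jR_Q(φξ₁,…,φξ_{4+j}) = ∇^jR_P(ξ₁,…,ξ_{4+j}) for 0 ≤ j ≤ k. -/
theorem exp_metric_k_curvature_homogeneous (p : ℕ) (k : ℕ) (P Q : Vp p) :
    ∃ φ : Vp p ≃ₗ[ℝ] Vp p,
      (∀ u v : Vp p, gP p Real.exp Q (φ u) (φ v) = gP p Real.exp P u v) ∧
      (∀ j : ℕ, j ≤ k → ∀ (ξ₁ ξ₂ ξ₃ ξ₄ : Vp p) (η : Fin j → Vp p),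
        nR p Real.exp j Q (φ ξ₁) (φ ξ₂) (φ ξ₃) (φ ξ₄) (fun l => φ (η l))
          = nR p Real.exp j P ξ₁ ξ₂ ξ₃ ξ₄ η) := by
  classical
  set s : ℝ := P (iy p) - Q (iy p) with hsdef
  set c : ℝ := Real.exp (s/2) with hcdef
  set cinv : ℝ := Real.exp (-(s/2)) with hcinvdef
  set rr : ℝ := c * FF p Real.exp Q - cinv * FF p Real.exp P with hrrdef
  have hbs : Q (iy p) + s = P (iy p) := by rw [hsdef]; ring
  have hc2 : c * c = Real.exp s := by rw [hcdef, ← Real.exp_add]; norm_num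
  have hccinv : c * cinv = 1 := by
    rw [hcdef, hcinvdef, ← Real.exp_add]; norm_num
  have hcne : c ≠ 0 := by rw [hcdef]; exact Real.exp_ne_zero _
  have hcinvne : cinv ≠ 0 := by rw [hcinvdef]; exact Real.exp_ne_zero _
  have hss : Real.exp s * Real.exp (-s) = 1 := by
    rw [← Real.exp_add]; norm_num
  have hdet : IsUnit (AMdef p s).det := AMdef_isUnit p s
  have hABone : AMdef p s * (AMdef p s)⁻¹ = 1 := Matrix.mul_nonsing_inv _ hdet
  -- the linear map
  let Tl : Vp p →ₗ[ℝ] Vp p :=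
    { toFun := Tfun p c cinv rr (evdef p s P Q) (mudef p s P Q) (AMdef p s) (Bdef p s)
      map_add' := fun u v => Tfun_add c cinv rr (evdef p s P Q) (mudef p s P Q)
        (AMdef p s) (Bdef p s) u v
      map_smul' := fun t u => Tfun_smul c cinv rr (evdef p s P Q) (mudef p s P Q)
        (AMdef p s) (Bdef p s) u t }
  have hker : ∀ u : Vp p,
      Tfun p c cinv rr (evdef p s P Q) (mudef p s P Q) (AMdef p s) (Bdef p s) u = 0
        → u = 0 := by
    intro u hu
    have hc' : ∀ a, Tfun p c cinv rr (evdef p s P Q) (mudef p s P Q) (AMdef p s)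
        (Bdef p s) u a = 0 := fun a => congrFun hu a
    have hx : u (ix p) = 0 := by
      have h := hc' (ix p); rw [Tfun_ix (A := AMdef p s)] at h
      exact (mul_eq_zero.mp h).resolve_left hcne
    have hy : u (iy p) = 0 := by
      have h := hc' (iy p); rwa [Tfun_iy (A := AMdef p s)] at h
    have hz : ∀ i : Fin (p+1), u (iz p i) = 0 := by
      have hvm : (fun i => u (iz p i)) ᵥ* AMdef p s = 0 := by
        funext jj
        have h := hc' (iz p jj)
        rw [Tfun_iz (A := AMdef p s)] at h
        rw [hy, mul_zero, zero_add] at h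
        show (fun i => u (iz p i)) ⬝ᵥ (fun i => AMdef p s i jj) = 0
        rw [dotProduct, ← h]
        exact Finset.sum_congr rfl fun i _ => by ring
      have h2 : (fun i => u (iz p i)) = 0 := by
        have h3 := congrArg (fun w => w ᵥ* (AMdef p s)⁻¹) hvm
        simpa only [Matrix.vecMul_vecMul, hABone, Matrix.vecMul_one,
          Matrix.zero_vecMul] using h3
      exact fun i => congrFun h2 i
    have hzb : ∀ i : Fin (p+1), u (izb p i) = 0 := by
      have hmv : (AMdef p s)⁻¹ *ᵥ (fun i => u (izb p i)) = 0 := by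
        funext l
        have h := hc' (izb p l)
        rw [Tfun_izb (A := AMdef p s)] at h
        simp only [Bdef] at h
        show (fun i0 => (AMdef p s)⁻¹ l i0) ⬝ᵥ (fun i => u (izb p i)) = 0
        rw [dotProduct, ← h]
        try exact Finset.sum_congr rfl fun i _ => by ring
      have h2 : (fun i => u (izb p i)) = 0 := by
        have h3 := congrArg (fun w => AMdef p s *ᵥ w) hmv
        simpa only [Matrix.mulVec_mulVec, hABone, Matrix.one_mulVec,
          Matrix.mulVec_zero] using h3
      exact fun i => congrFun h2 i
    have hxb : u (ixb p) = 0 := by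
      have h := hc' (ixb p); rw [Tfun_ixb (A := AMdef p s), hx, mul_zero, add_zero] at h
      exact (mul_eq_zero.mp h).resolve_left hcinvne
    have hyb : u (iyb p) = 0 := by
      have h := hc' (iyb p); rw [Tfun_iyb (A := AMdef p s)] at h
      have hzz : ∑ i : Fin (p+1), mudef p s P Q i * u (izb p i) = 0 :=
        Finset.sum_eq_zero fun i _ => by rw [hzb i, mul_zero]
      rwa [hzz, add_zero] at h
    funext a
    rcases index_cases p a with h|h|⟨jx,h⟩|h|h|⟨jx,h⟩ <;> subst h <;>
      simp [hx, hy, hz, hxb, hyb, hzb]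
  have hinj : Function.Injective Tl := by
    rw [injective_iff_map_eq_zero]
    exact fun u hu => hker u hu
  refine ⟨LinearEquiv.ofBijective Tl ⟨hinj, LinearMap.injective_iff_surjective.mp hinj⟩,
    ?_, ?_⟩
  · -- the metric is preserved
    intro u v
    have hφu : (LinearEquiv.ofBijective Tl
        ⟨hinj, LinearMap.injective_iff_surjective.mp hinj⟩) u
        = Tfun p c cinv rr (evdef p s P Q) (mudef p s P Q) (AMdef p s) (Bdef p s) u := rfl
    have hφv : (LinearEquiv.ofBijective Tl
        ⟨hinj, LinearMap.injective_iff_surjective.mp hinj⟩) v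
        = Tfun p c cinv rr (evdef p s P Q) (mudef p s P Q) (AMdef p s) (Bdef p s) v := rfl
    rw [hφu, hφv]
    simp only [gP, Tfun_ix (A := AMdef p s), Tfun_iy (A := AMdef p s), Tfun_ixb (A := AMdef p s),
      Tfun_iyb (A := AMdef p s), Tfun_iz (A := AMdef p s), Tfun_izb (A := AMdef p s), Bdef]
    have hblock := gblock p (AMdef p s) hABone (evdef p s P Q) (u (iy p)) (v (iy p))
      (fun i => u (iz p i)) (fun i => v (iz p i))
      (fun i => u (izb p i)) (fun i => v (izb p i))
    rw [hblock]
    simp only [mudef]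
    have hneg : ∀ zb : Fin (p+1) → ℝ,
        (∑ i : Fin (p+1), (-∑ l : Fin (p+1), evdef p s P Q l * (AMdef p s)⁻¹ l i) * zb i)
          = -∑ i : Fin (p+1), (∑ l : Fin (p+1), evdef p s P Q l * (AMdef p s)⁻¹ l i)
              * zb i := by
      intro zb
      rw [← Finset.sum_neg_distrib]
      exact Finset.sum_congr rfl fun i _ => by ring
    rw [hneg fun i => v (izb p i), hneg fun i => u (izb p i)]
    have hcr : c * rr = Real.exp s * FF p Real.exp Q - FF p Real.exp P := by
      rw [hrrdef]
      calc c * (c * FF p Real.exp Q - cinv * FF p Real.exp P)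
          = (c*c) * FF p Real.exp Q - (c*cinv) * FF p Real.exp P := by ring
        _ = _ := by rw [hc2, hccinv]; ring
    linear_combination (u (ix p) * v (ixb p) + u (ixb p) * v (ix p)) * hccinv
      + (2 * (u (ix p) * v (ix p))) * hcr
      + (-(2 * FF p Real.exp Q * (u (ix p) * v (ix p)))) * hc2
  · -- the curvature tensors agree
    intro j hj ξ₁ ξ₂ ξ₃ ξ₄ η
    have hphi : ∀ w, (LinearEquiv.ofBijective Tl
        ⟨hinj, LinearMap.injective_iff_surjective.mp hinj⟩) w
        = Tfun p c cinv rr (evdef p s P Q) (mudef p s P Q) (AMdef p s) (Bdef p s) w :=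
      fun w => rfl
    simp only [hphi]
    rw [nR_Tfun c cinv rr (evdef p s P Q) (mudef p s P Q) (AMdef p s) (Bdef p s)
      j Real.exp Q ξ₁ ξ₂ ξ₃ ξ₄ η]
    rw [nR_eq_NF p j Real.exp P ξ₁ ξ₂ ξ₃ ξ₄ η]
    have hC1 : ∀ i : Fin (p+1),
        Real.exp s * ∑ i' : Fin (p+1), AMdef p s i i' * Dn (j+1) i'.1 (Q (iy p))
          = Dn (j+1) i.1 (P (iy p)) := by
      intro i
      have h := key1 p i (j+1) (by omega) (Q (iy p)) s
      rw [← hbs, ← h, Finset.mul_sum]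
      refine Finset.sum_congr rfl fun i' _ => ?_
      have hAMe : AMdef p s i i' = Real.exp (-s) * Am s i.1 i'.1 := rfl
      rw [hAMe]
      linear_combination (Am s i.1 i'.1 * Dn (j+1) i'.1 (Q (iy p))) * hss
    have hq : ∀ l : Fin (p+1),
        Real.exp s * (qdef p s P Q l + Q (iz p l))
          = ∑ i : Fin (p+1), P (iz p i) * Am s i.1 l.1 := by
      intro l
      simp only [qdef]
      linear_combination (∑ i : Fin (p+1), P (iz p i) * Am s i.1 l.1) * hss
    have hC2 : Real.exp s * (iteratedDeriv (j+2) Real.exp (Q (iy p))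
          + ∑ i : Fin (p+1), Dn (j+2) i.1 (Q (iy p)) * Q (iz p i))
        + ((j:ℝ)+2) * Real.exp s
            * (∑ i : Fin (p+1), Dn (j+1) i.1 (Q (iy p)) * evdef p s P Q i)
        = iteratedDeriv (j+2) Real.exp (P (iy p))
          + ∑ i : Fin (p+1), Dn (j+2) i.1 (P (iy p)) * P (iz p i) := by
      have hm := c2_master p j (Q (iy p)) s (fun i => Q (iz p i)) (fun i => P (iz p i))
        (qdef p s P Q) hq
      rw [hbs] at hm
      have e1 : iteratedDeriv (j+2) Real.exp (Q (iy p)) = Real.exp (Q (iy p)) := by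
        rw [iterD_exp]
      have e2 : iteratedDeriv (j+2) Real.exp (P (iy p)) = Real.exp (P (iy p)) := by
        rw [iterD_exp]
      rw [e1, e2]
      exact hm
    exact NF_transform p j (Real.exp s) c
      (iteratedDeriv (j+2) Real.exp (P (iy p))
        + ∑ i : Fin (p+1), Dn (j+2) i.1 (P (iy p)) * P (iz p i))
      (iteratedDeriv (j+2) Real.exp (Q (iy p))
        + ∑ i : Fin (p+1), Dn (j+2) i.1 (Q (iy p)) * Q (iz p i))
      (fun i => Dn (j+1) i.1 (P (iy p)))
      (fun i => Dn (j+1) i.1 (Q (iy p)))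
      (evdef p s P Q) (AMdef p s)
      (wdg p (ix p) (iy p) ξ₁ ξ₂) (wdg p (ix p) (iy p) ξ₃ ξ₄)
      (fun i => wdg p (ix p) (iz p i) ξ₁ ξ₂) (fun i => wdg p (ix p) (iz p i) ξ₃ ξ₄)
      (fun l => η l (iy p)) (fun i l => η l (iz p i))
      hc2 hC1 hC2
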